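/- Let A be a symmetric real 2m×2m positive definite matrix and B a real k×k matrix with B + Bᵀ positive definite. Define H(x,q,p) = ½ xᵀAx + pᵀBq − 1 on ℝ^{2m} × ℝᵏ × ℝᵏ, and let Y be the vector field Y(x,q,p) = (½x, ½q + a p, ½p + a q) where a = ‖B‖/c + 1 and c > 0 is chosen so that xᵀAx ≥ c|x|² and vᵀ(B+Bᵀ)v ≥ c|v|² for all x, v. Then dH(Y)(x,q,p) ≥ (c/2)(|x|² + |q|² + |p|²) for all (x,q,p). -/

import Mathlib

open Matrix

/-- The operator norm of a real matrix acting on Euclidean space. -/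
noncomputable def matOpNorm {k : ℕ} (B : Matrix (Fin k) (Fin k) ℝ) : ℝ :=
  ‖(Matrix.toEuclideanCLM (𝕜 := ℝ) B :
      EuclideanSpace ℝ (Fin k) →L[ℝ] EuclideanSpace ℝ (Fin k))‖

lemma inner_aux {k : ℕ} (B : Matrix (Fin k) (Fin k) ℝ) (p q : Fin k → ℝ) :
    p ⬝ᵥ B.mulVec q =
      inner ℝ ((WithLp.equiv 2 _).symm p : EuclideanSpace ℝ (Fin k))
        ((Matrix.toEuclideanCLM (𝕜 := ℝ) B) ((WithLp.equiv 2 _).symm q)) := by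
  simp only [WithLp.equiv_symm_apply, Matrix.toEuclideanCLM_toLp]
  simp [inner, dotProduct, mul_comm]

lemma dot_nonneg_aux {k : ℕ} (p : Fin k → ℝ) : 0 ≤ p ⬝ᵥ p :=
  Finset.sum_nonneg fun i _ => mul_self_nonneg (p i)

lemma norm_sq_aux {k : ℕ} (p : Fin k → ℝ) :
    ‖((WithLp.equiv 2 _).symm p : EuclideanSpace ℝ (Fin k))‖ ^ 2 = p ⬝ᵥ p := by
  rw [← real_inner_self_eq_norm_sq]
  simp [inner, dotProduct]

lemma bound_aux {k : ℕ} (B : Matrix (Fin k) (Fin k) ℝ) (p q : Fin k → ℝ) :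
    -(matOpNorm B / 2 * (q ⬝ᵥ q + p ⬝ᵥ p)) ≤ p ⬝ᵥ B.mulVec q := by
  set p' : EuclideanSpace ℝ (Fin k) := (WithLp.equiv 2 _).symm p
  set q' : EuclideanSpace ℝ (Fin k) := (WithLp.equiv 2 _).symm q
  have h1 : |p ⬝ᵥ B.mulVec q| ≤ matOpNorm B * ‖p'‖ * ‖q'‖ := by
    rw [inner_aux]
    calc |inner ℝ p' ((Matrix.toEuclideanCLM (𝕜 := ℝ) B) q')|
        ≤ ‖p'‖ * ‖(Matrix.toEuclideanCLM (𝕜 := ℝ) B) q'‖ := abs_real_inner_le_norm _ _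
      _ ≤ ‖p'‖ * (matOpNorm B * ‖q'‖) := by
          gcongr; exact ((Matrix.toEuclideanCLM (𝕜 := ℝ) B)).le_opNorm _
      _ = matOpNorm B * ‖p'‖ * ‖q'‖ := by ring
  have h2 : ‖p'‖ * ‖q'‖ ≤ (q ⬝ᵥ q + p ⬝ᵥ p) / 2 := by
    nlinarith [norm_sq_aux p, norm_sq_aux q, sq_nonneg (‖p'‖ - ‖q'‖),
      norm_nonneg p', norm_nonneg q']
  have hB : 0 ≤ matOpNorm B := norm_nonneg _
  have := abs_le.mp h1 |>.1
  nlinarith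

lemma sym_aux {k : ℕ} (B : Matrix (Fin k) (Fin k) ℝ) (v : Fin k → ℝ) :
    v ⬝ᵥ (B + Bᵀ).mulVec v = 2 * (v ⬝ᵥ B.mulVec v) := by
  rw [Matrix.add_mulVec, dotProduct_add]
  have : v ⬝ᵥ Bᵀ.mulVec v = v ⬝ᵥ B.mulVec v := by
    rw [Matrix.dotProduct_mulVec, Matrix.vecMul_transpose, dotProduct_comm]
  rw [this]; ring

/-- Estimate `dH(Y) ≥ (c/2)(|x|² + |q|² + |p|²)` for
`H(x,q,p) = ½xᵀAx + pᵀBq − 1` and the Liouville vector field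
`Y = (½x, ½q + a p, ½p + a q)`, where `dH(Y) = ½xᵀAx + pᵀBq + a(qᵀBq + pᵀBp)`. -/
theorem liouville_estimate (m k : ℕ)
    (A : Matrix (Fin (2 * m)) (Fin (2 * m)) ℝ) (B : Matrix (Fin k) (Fin k) ℝ)
    (c a : ℝ) (hc : 0 < c) (hA : A.IsSymm) (hApos : A.PosDef)
    (hBpos : (B + Bᵀ).PosDef)
    (hAc : ∀ x : Fin (2 * m) → ℝ, c * (x ⬝ᵥ x) ≤ x ⬝ᵥ A.mulVec x)
    (hBc : ∀ v : Fin k → ℝ, c * (v ⬝ᵥ v) ≤ v ⬝ᵥ (B + Bᵀ).mulVec v)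
    (ha : a = matOpNorm B / c + 1) :
    ∀ (x : Fin (2 * m) → ℝ) (q p : Fin k → ℝ),
      c / 2 * (x ⬝ᵥ x + q ⬝ᵥ q + p ⬝ᵥ p) ≤
        1 / 2 * (x ⬝ᵥ A.mulVec x) + p ⬝ᵥ B.mulVec q
          + a * (q ⬝ᵥ B.mulVec q + p ⬝ᵥ B.mulVec p) := by
  intro x q p
  have hx := hAc x
  have hq := hBc q
  have hp := hBc p
  rw [sym_aux] at hq hp
  have hpq := bound_aux B p q
  have hB : 0 ≤ matOpNorm B := norm_nonneg _
  have hqq := dot_nonneg_aux q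
  have hpp := dot_nonneg_aux p
  have ha0 : 0 ≤ a := by rw [ha]; positivity
  have haB : a * c = matOpNorm B + c := by
    rw [ha]; field_simp
  nlinarith [mul_le_mul_of_nonneg_left hq (by positivity : (0:ℝ) ≤ a / 2),
    mul_le_mul_of_nonneg_left hp (by positivity : (0:ℝ) ≤ a / 2)]
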